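/- Let K be Stonian and suppose the Boolean algebra B of idempotents in C(K) is a Bade-complete Boolean algebra of projections on a Banach C(K)-module X. Then X is a Kaplansky module. -/
import Mathlib


open Filter Topology

/-- The Boolean algebra of idempotents of `C(K)` is Bade complete on `X`: for every
nonempty upward-directed set of idempotents with supremum an idempotent `E`, the net
`m e x` converges in norm to `m E x` for every `x`. -/
def BadeComplete {K X : Type*} [TopologicalSpace K] [CompactSpace K] [T2Space K]
    [NormedAddCommGroup X] [NormedSpace ℝ X] [CompleteSpace X]
    (m : C(K, ℝ) →ₐ[ℝ] (X →L[ℝ] X)) : Prop :=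
  ∀ S : Set C(K, ℝ), (∀ e ∈ S, e * e = e) → S.Nonempty → DirectedOn (· ≤ ·) S →
    ∀ E : C(K, ℝ), E * E = E → IsLUB S E →
      ∀ x : X, Filter.Tendsto (fun e : S => m (e : C(K, ℝ)) x) Filter.atTop (nhds (m E x))

/-- Kaplansky condition (2). -/
def IsKaplansky {K X : Type*} [TopologicalSpace K] [CompactSpace K] [T2Space K]
    [NormedAddCommGroup X] [NormedSpace ℝ X] [CompleteSpace X]
    (m : C(K, ℝ) →ₐ[ℝ] (X →L[ℝ] X)) : Prop :=
  ∀ (x : X) (A : Set C(K, ℝ)), (∀ a ∈ A, 0 ≤ a) → A.Nonempty → BddAbove A →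
    ∀ b : C(K, ℝ), IsLUB A b → (∀ a ∈ A, m a x = 0) → m b x = 0

noncomputable def chiFun {K : Type*} [TopologicalSpace K] (U : Set K) (hU : IsClopen U) :
    C(K, ℝ) := by
  classical
  exact ⟨fun t => if t ∈ U then (1:ℝ) else 0,
    continuous_if (by simp [hU.frontier_eq]) continuous_const.continuousOn
      continuous_const.continuousOn⟩

lemma chiFun_mem {K : Type*} [TopologicalSpace K] {U : Set K} (hU : IsClopen U) {t : K}
    (ht : t ∈ U) : chiFun U hU t = 1 := by simp [chiFun, ht]

lemma chiFun_notMem {K : Type*} [TopologicalSpace K] {U : Set K} (hU : IsClopen U) {t : K}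
    (ht : t ∉ U) : chiFun U hU t = 0 := by simp [chiFun, ht]

lemma chiFun_idem {K : Type*} [TopologicalSpace K] {U : Set K} (hU : IsClopen U) :
    chiFun U hU * chiFun U hU = chiFun U hU := by
  ext t
  by_cases ht : t ∈ U <;>
    simp [ContinuousMap.mul_apply, chiFun_mem hU, chiFun_notMem hU, ht]

theorem stmt12' {K X : Type*} [TopologicalSpace K] [CompactSpace K] [T2Space K]
    [ExtremallyDisconnected K]
    [NormedAddCommGroup X] [NormedSpace ℝ X] [CompleteSpace X]
    (m : C(K, ℝ) →ₐ[ℝ] (X →L[ℝ] X))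
    (hm : ∀ a : C(K, ℝ), ‖m a‖ = ‖a‖)
    (hBade : ∀ S : Set C(K, ℝ), (∀ e ∈ S, e * e = e) → S.Nonempty → DirectedOn (· ≤ ·) S →
      ∀ E : C(K, ℝ), E * E = E → IsLUB S E →
      ∀ x : X, Filter.Tendsto (fun e : S => m (e : C(K, ℝ)) x) Filter.atTop (nhds (m E x))) :
    ∀ (x : X) (A : Set C(K, ℝ)), (∀ a ∈ A, 0 ≤ a) → A.Nonempty → BddAbove A →
    ∀ b : C(K, ℝ), IsLUB A b → (∀ a ∈ A, m a x = 0) → m b x = 0 := by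
  intro x A hA0 hAne _hAbdd b hb hAx
  obtain ⟨a₀, ha₀⟩ := hAne
  have key : ∀ ε : ℝ, 0 < ε → ‖m b x‖ ≤ ε * ‖x‖ := by
    intro ε hε
    -- the big clopen set U and its idempotent E
    set V : Set K := ⋃ a ∈ A, {t | ε < a t} with hVdef
    have hVopen : IsOpen V :=
      isOpen_biUnion fun a _ => isOpen_lt continuous_const a.continuous
    have hU : IsClopen (closure V) :=
      ⟨isClosed_closure, ExtremallyDisconnected.open_closure V hVopen⟩
    set E : C(K, ℝ) := chiFun (closure V) hU with hEdef
    have hEidem : E * E = E := chiFun_idem hU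
    have hEval : ∀ t, E t = 0 ∨ E t = 1 := by
      intro t
      by_cases ht : t ∈ closure V
      · exact Or.inr (chiFun_mem hU ht)
      · exact Or.inl (chiFun_notMem hU ht)
    -- for each a ∈ A, the idempotent e_a kills x
    have hUa : ∀ a : C(K, ℝ), IsClopen (closure {t | ε < a t}) := fun a =>
      ⟨isClosed_closure, ExtremallyDisconnected.open_closure _
        (isOpen_lt continuous_const a.continuous)⟩
    have hUasub : ∀ a ∈ A, closure {t | ε < a t} ⊆ closure V := fun a ha =>
      closure_mono (Set.subset_biUnion_of_mem (u := fun a => {t | ε < a t}) ha)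
    have hage : ∀ (a : C(K, ℝ)), ∀ t ∈ closure {t | ε < a t}, ε ≤ a t := by
      intro a t ht
      have hsub : closure {t | ε < a t} ⊆ {t | ε ≤ a t} := by
        apply closure_minimal ?_ (isClosed_le continuous_const a.continuous)
        intro s hs
        simp only [Set.mem_setOf_eq] at hs ⊢
        exact le_of_lt hs
      exact hsub ht
    have hkill : ∀ a ∈ A, m (chiFun _ (hUa a)) x = 0 := by
      intro a ha
      set g : C(K, ℝ) := chiFun _ (hUa a) *
        ⟨fun t => (max (a t) ε)⁻¹,
          ((a.continuous.max continuous_const).inv₀ fun t =>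
            ne_of_gt (lt_of_lt_of_le hε (le_max_right _ _)))⟩ with hgdef
      have hga : g * a = chiFun _ (hUa a) := by
        ext t
        by_cases ht : t ∈ closure {t | ε < a t}
        · have h1 : max (a t) ε = a t := max_eq_left (hage a t ht)
          have h2 : a t ≠ 0 := ne_of_gt (lt_of_lt_of_le hε (hage a t ht))
          simp [hgdef, ContinuousMap.mul_apply, chiFun_mem (hUa a) ht, h1,
            inv_mul_cancel₀ h2]
        · simp [hgdef, ContinuousMap.mul_apply, chiFun_notMem (hUa a) ht]
      calc m (chiFun _ (hUa a)) x = m (g * a) x := by rw [hga]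
        _ = m g (m a x) := by rw [map_mul]; rfl
        _ = 0 := by rw [hAx a ha, map_zero]
    -- the directed set of idempotents killing x, below E
    set S : Set C(K, ℝ) :=
      {e | e * e = e ∧ 0 ≤ e ∧ e ≤ E ∧ m e x = 0} with hSdef
    have hval : ∀ e ∈ S, ∀ t, e t = 0 ∨ e t = 1 := by
      intro e he t
      have := congrArg (fun f : C(K, ℝ) => f t) he.1
      simp only [ContinuousMap.mul_apply] at this
      exact IsIdempotentElem.iff_eq_zero_or_one.mp this
    have heamem : ∀ a ∈ A, chiFun _ (hUa a) ∈ S := by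
      intro a ha
      refine ⟨chiFun_idem (hUa a), ?_, ?_, hkill a ha⟩
      · rw [ContinuousMap.le_def]
        intro t
        by_cases ht : t ∈ closure {t | ε < a t} <;>
          simp [chiFun_mem (hUa a), chiFun_notMem (hUa a), ht]
      · rw [ContinuousMap.le_def]
        intro t
        by_cases ht : t ∈ closure {t | ε < a t}
        · have : t ∈ closure V := hUasub a ha ht
          simp [chiFun_mem (hUa a) ht, hEdef, chiFun_mem hU this]
        · rcases hEval t with h | h <;>
            simp [chiFun_notMem (hUa a) ht, h]
    have hSne : S.Nonempty := ⟨_, heamem a₀ ha₀⟩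
    have hSdir : DirectedOn (· ≤ ·) S := by
      intro e he f hf
      refine ⟨e + f - e * f, ⟨?_, ?_, ?_, ?_⟩, ?_, ?_⟩
      · ext t
        rcases hval e he t with h1 | h1 <;> rcases hval f hf t with h2 | h2 <;>
          simp [ContinuousMap.mul_apply, ContinuousMap.add_apply,
            ContinuousMap.sub_apply, h1, h2]
      · rw [ContinuousMap.le_def]
        intro t
        rcases hval e he t with h1 | h1 <;> rcases hval f hf t with h2 | h2 <;>
          simp [ContinuousMap.mul_apply, ContinuousMap.add_apply,
            ContinuousMap.sub_apply, h1, h2]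
      · rw [ContinuousMap.le_def]
        intro t
        have he1 : e t ≤ E t := ContinuousMap.le_def.mp he.2.2.1 t
        have hf1 : f t ≤ E t := ContinuousMap.le_def.mp hf.2.2.1 t
        have hh : (e + f - e * f) t = e t + f t - e t * f t := by
          simp [ContinuousMap.mul_apply]
        rw [hh]
        rcases hval e he t with h1 | h1 <;> rcases hval f hf t with h2 | h2 <;>
          rw [h1] at he1 ⊢ <;> rw [h2] at hf1 ⊢ <;> norm_num <;> linarith
      · have : m (e * f) x = m e (m f x) := by rw [map_mul]; rfl
        simp [map_sub, map_add, this, he.2.2.2, hf.2.2.2,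
          ContinuousLinearMap.sub_apply, ContinuousLinearMap.add_apply]
      · show _ ≤ _
        rw [ContinuousMap.le_def]
        intro t
        rcases hval e he t with h1 | h1 <;> rcases hval f hf t with h2 | h2 <;>
          simp [ContinuousMap.mul_apply, ContinuousMap.add_apply,
            ContinuousMap.sub_apply, h1, h2]
      · show _ ≤ _
        rw [ContinuousMap.le_def]
        intro t
        rcases hval e he t with h1 | h1 <;> rcases hval f hf t with h2 | h2 <;>
          simp [ContinuousMap.mul_apply, ContinuousMap.add_apply,
            ContinuousMap.sub_apply, h1, h2]
    have hElub : IsLUB S E := by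
      constructor
      · intro e he; exact he.2.2.1
      · intro c hc
        rw [ContinuousMap.le_def]
        intro t
        by_cases ht : t ∈ closure V
        · have hsub : V ⊆ {s | 1 ≤ c s} := by
            intro s hs
            simp only [hVdef, Set.mem_iUnion] at hs
            obtain ⟨a, ha, hs⟩ := hs
            have h1 : chiFun _ (hUa a) ≤ c := hc (heamem a ha)
            have h2 : chiFun _ (hUa a) s ≤ c s := ContinuousMap.le_def.mp h1 s
            rw [chiFun_mem (hUa a) (subset_closure hs)] at h2
            exact h2
          have hcl : closure V ⊆ {s | 1 ≤ c s} :=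
            closure_minimal hsub (isClosed_le continuous_const c.continuous)
          have := hcl ht
          simpa [hEdef, chiFun_mem hU ht] using this
        · have h1 : chiFun _ (hUa a₀) ≤ c := hc (heamem a₀ ha₀)
          have h2 : (0 : C(K, ℝ)) t ≤ chiFun _ (hUa a₀) t :=
            ContinuousMap.le_def.mp (heamem a₀ ha₀).2.1 t
          have h3 : chiFun _ (hUa a₀) t ≤ c t := ContinuousMap.le_def.mp h1 t
          simp only [ContinuousMap.zero_apply] at h2
          simp only [hEdef, chiFun_notMem hU ht]
          linarith
    -- Bade completeness gives m E x = 0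
    have hT : Filter.Tendsto (fun e : S => m (e : C(K, ℝ)) x) Filter.atTop (nhds (m E x)) :=
      hBade S (fun e he => he.1) hSne hSdir E hEidem hElub x
    have hconst : (fun e : S => m (e : C(K, ℝ)) x) = fun _ => (0 : X) :=
      funext fun e => e.2.2.2.2
    rw [hconst] at hT
    haveI : Nonempty S := hSne.to_subtype
    haveI : IsDirected S (· ≤ ·) := by
      constructor
      intro e f
      obtain ⟨c, hc, hec, hfc⟩ := hSdir e e.2 f f.2
      exact ⟨⟨c, hc⟩, hec, hfc⟩
    have hEx : m E x = 0 := (tendsto_nhds_unique tendsto_const_nhds hT).symm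
    -- the estimate
    have hbub : b ≤ b * E + ε • ((1 : C(K, ℝ)) - E) := by
      apply hb.2
      intro a ha
      rw [ContinuousMap.le_def]
      intro t
      rcases hEval t with h | h
      · have hatU : t ∉ closure V := fun hmem => by
          rw [hEdef, chiFun_mem hU hmem] at h; norm_num at h
        have haε : a t ≤ ε := by
          by_contra hlt
          exact hatU (subset_closure (by
            simp only [hVdef, Set.mem_iUnion]
            exact ⟨a, ha, lt_of_not_ge hlt⟩))
        simp only [ContinuousMap.add_apply, ContinuousMap.mul_apply,
          ContinuousMap.smul_apply, ContinuousMap.sub_apply, ContinuousMap.one_apply, h]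
        simpa using haε
      · have := ContinuousMap.le_def.mp (hb.1 ha) t
        simp only [ContinuousMap.add_apply, ContinuousMap.mul_apply,
          ContinuousMap.smul_apply, ContinuousMap.sub_apply, ContinuousMap.one_apply, h]
        simpa using this
    have hnorm : ‖b - b * E‖ ≤ ε := by
      rw [ContinuousMap.norm_le _ hε.le]
      intro t
      rcases hEval t with h | h
      · have h1 := ContinuousMap.le_def.mp hbub t
        simp only [ContinuousMap.add_apply, ContinuousMap.mul_apply,
          ContinuousMap.smul_apply, ContinuousMap.sub_apply, ContinuousMap.one_apply, h] at h1 ⊢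
        have hb0 : 0 ≤ b t := le_trans (ContinuousMap.le_def.mp (hA0 a₀ ha₀) t) (ContinuousMap.le_def.mp (hb.1 ha₀) t)
        rw [Real.norm_eq_abs, abs_of_nonneg (by linarith)]
        simpa using h1
      · simp [ContinuousMap.sub_apply, ContinuousMap.mul_apply, h, hε.le]
    have hsplit : m b x = m (b - b * E) x := by
      have h1 : m (b * E) x = m b (m E x) := by rw [map_mul]; rfl
      have : m b x = m (b - b * E) x + m (b * E) x := by
        rw [← ContinuousLinearMap.add_apply, ← map_add]
        congr 1
        ring
      rw [this, h1, hEx, map_zero, add_zero]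
    calc ‖m b x‖ = ‖m (b - b * E) x‖ := by rw [hsplit]
      _ ≤ ‖m (b - b * E)‖ * ‖x‖ := (m (b - b * E)).le_opNorm x
      _ = ‖b - b * E‖ * ‖x‖ := by rw [hm]
      _ ≤ ε * ‖x‖ := mul_le_mul_of_nonneg_right hnorm (norm_nonneg x)
  -- conclude
  have h0 : ‖m b x‖ ≤ 0 := by
    apply le_of_forall_pos_le_add
    intro δ hδ
    have hx1 : (0:ℝ) < ‖x‖ + 1 := by positivity
    have := key (δ / (‖x‖ + 1)) (by positivity)
    have h2 : δ / (‖x‖ + 1) * ‖x‖ ≤ δ := by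
      rw [div_mul_eq_mul_div, div_le_iff₀ hx1]
      nlinarith [norm_nonneg x]
    linarith
  simpa using norm_le_zero_iff.mp h0

/-- If `K` is Stonian and the idempotents of `C(K)` form a Bade-complete Boolean algebra
of projections on `X`, then `X` is a Kaplansky module. -/
theorem stmt12 {K X : Type*} [TopologicalSpace K] [CompactSpace K] [T2Space K]
    [ExtremallyDisconnected K]
    [NormedAddCommGroup X] [NormedSpace ℝ X] [CompleteSpace X]
    (m : C(K, ℝ) →ₐ[ℝ] (X →L[ℝ] X))
    (hm : ∀ a : C(K, ℝ), ‖m a‖ = ‖a‖)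
    (hBade : BadeComplete m) :
    IsKaplansky m := by
  exact stmt12' m hm hBade
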